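/- Let t ≥ 2 and let G be the graph obtained from the complete bipartite graph K_{2⌊t/2⌋, 2⌊t/2⌋−1} by deleting the four edges of an induced 4-cycle C₄. Then Tr₂(G) = ⌊t/2⌋ + 1. -/
import Mathlib


open SimpleGraph

def TwoTransPart {V : Type*} (G : SimpleGraph V) (k : ℕ) (P : Fin k → Set V) : Prop :=
  (∀ i, (P i).Nonempty) ∧ (∀ v, ∃! i, v ∈ P i) ∧
    ∀ i j : Fin k, i < j → ∀ v ∈ P j,
      ∃ u w, u ∈ P i ∧ w ∈ P i ∧ u ≠ w ∧ G.Adj u v ∧ G.Adj w v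

/-- The 2-transitivity `Tr₂(G)`: the maximum size of a 2-transitive partition of `G`. -/
noncomputable def tr2 {V : Type*} (G : SimpleGraph V) : ℕ :=
  sSup {k | ∃ P : Fin k → Set V, TwoTransPart G k P}

lemma aux_count {V W : Type*} [Fintype W] {k : ℕ} (P : Fin k → Set V)
    (h2 : ∀ v, ∃! i, v ∈ P i) (f : W → V) (hf : Function.Injective f)
    (q : Fin (k-1) → W × W) (hq : ∀ i, (q i).1 ≠ (q i).2)
    (hmem : ∀ i : Fin (k-1),
      f (q i).1 ∈ P ⟨i.1, lt_of_lt_of_le i.2 (Nat.sub_le k 1)⟩ ∧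
      f (q i).2 ∈ P ⟨i.1, lt_of_lt_of_le i.2 (Nat.sub_le k 1)⟩) :
    2 * (k - 1) ≤ Fintype.card W := by
  have huniq : ∀ (x : V) (i i' : Fin k), x ∈ P i → x ∈ P i' → i = i' := by
    intro x i i' h h'
    obtain ⟨c, hc, hcu⟩ := h2 x
    rw [hcu i h, hcu i' h']
  have hFmem : ∀ (i : Fin (k-1)) (b : Bool),
      f (if b then (q i).1 else (q i).2) ∈ P ⟨i.1, lt_of_lt_of_le i.2 (Nat.sub_le k 1)⟩ := by
    intro i b; cases b
    · exact (hmem i).2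
    · exact (hmem i).1
  have hinj : Function.Injective (fun z : Fin (k-1) × Bool => if z.2 then (q z.1).1 else (q z.1).2) := by
    rintro ⟨i, bi⟩ ⟨i', bi'⟩ hEq
    simp only at hEq
    have h1 := hFmem i bi
    have h2' := hFmem i' bi'
    rw [hEq] at h1
    have hii' := huniq _ _ _ h1 h2'
    have hii : i = i' := by
      simp only [Fin.mk.injEq] at hii'
      exact Fin.ext hii'
    subst hii
    cases bi <;> cases bi'
    · rfl
    · simp only [Bool.false_eq_true, if_false, if_true] at hEq
      exact absurd hEq.symm (hq i)
    · simp only [Bool.false_eq_true, if_false, if_true] at hEq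
      exact absurd hEq (hq i)
    · rfl
  have := Fintype.card_le_of_injective _ hinj
  simpa [Fintype.card_prod, mul_comm] using this

theorem key (n : ℕ) (hs : 2 ≤ n) (x0 x1 : Fin (2*n)) (y0 y1 : Fin (2*n-1))
    (hx : x0 ≠ x1) (hy : y0 ≠ y1) :
    tr2 ((completeBipartiteGraph (Fin (2*n)) (Fin (2*n-1))) \
        SimpleGraph.fromEdgeSet {s(Sum.inl x0, Sum.inr y0), s(Sum.inl x0, Sum.inr y1),
          s(Sum.inl x1, Sum.inr y0), s(Sum.inl x1, Sum.inr y1)}) = n + 1 := by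
  set G := ((completeBipartiteGraph (Fin (2*n)) (Fin (2*n-1))) \
        SimpleGraph.fromEdgeSet {s(Sum.inl x0, Sum.inr y0), s(Sum.inl x0, Sum.inr y1),
          s(Sum.inl x1, Sum.inr y0), s(Sum.inl x1, Sum.inr y1)}) with hG
  have hAdj : ∀ a b, G.Adj (Sum.inl a) (Sum.inr b) ↔ ¬((a = x0 ∨ a = x1) ∧ (b = y0 ∨ b = y1)) := by
    intro a b
    rw [hG]
    simp [Sym2.eq_iff]
    tauto
  have hleft : ∀ (u : Fin (2*n) ⊕ Fin (2*n-1)) b, G.Adj u (Sum.inr b) → ∃ a, u = Sum.inl a := by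
    intro u b h
    cases u with
    | inl a => exact ⟨a, rfl⟩
    | inr c => rw [hG] at h; simp at h
  have hright : ∀ (u : Fin (2*n) ⊕ Fin (2*n-1)) a, G.Adj u (Sum.inl a) → ∃ b, u = Sum.inr b := by
    intro u a h
    cases u with
    | inr b => exact ⟨b, rfl⟩
    | inl c => rw [hG] at h; simp at h
  have hub : ∀ k ∈ {k | ∃ P : Fin k → Set (Fin (2*n) ⊕ Fin (2*n-1)), TwoTransPart G k P}, k ≤ n + 1 := by
    intro k hk
    obtain ⟨P, h1, h2, h3⟩ := hk
    by_contra hlt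
    push_neg at hlt
    have hk1 : k - 1 < k := by omega
    obtain ⟨v, hv⟩ := h1 ⟨k-1, hk1⟩
    have hltj : ∀ i : Fin (k-1), (⟨i.1, lt_of_lt_of_le i.2 (Nat.sub_le k 1)⟩ : Fin k) < ⟨k-1, hk1⟩ := by
      intro i; rw [Fin.lt_def]; exact i.2
    cases v with
    | inr b =>
      have H : ∀ i : Fin (k-1), ∃ p : Fin (2*n) × Fin (2*n), p.1 ≠ p.2 ∧
          Sum.inl p.1 ∈ P ⟨i.1, lt_of_lt_of_le i.2 (Nat.sub_le k 1)⟩ ∧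
          Sum.inl p.2 ∈ P ⟨i.1, lt_of_lt_of_le i.2 (Nat.sub_le k 1)⟩ := by
        intro i
        obtain ⟨u, w, hu, hw, huw, ha1, ha2⟩ := h3 _ _ (hltj i) _ hv
        obtain ⟨a1, rfl⟩ := hleft _ _ ha1
        obtain ⟨a2, rfl⟩ := hleft _ _ ha2
        exact ⟨(a1, a2), by simpa using huw, hu, hw⟩
      choose q hq hm1 hm2 using H
      have := aux_count P h2 Sum.inl Sum.inl_injective q hq (fun i => ⟨hm1 i, hm2 i⟩)
      simp at this
      omega
    | inl a =>
      have H : ∀ i : Fin (k-1), ∃ p : Fin (2*n-1) × Fin (2*n-1), p.1 ≠ p.2 ∧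
          Sum.inr p.1 ∈ P ⟨i.1, lt_of_lt_of_le i.2 (Nat.sub_le k 1)⟩ ∧
          Sum.inr p.2 ∈ P ⟨i.1, lt_of_lt_of_le i.2 (Nat.sub_le k 1)⟩ := by
        intro i
        obtain ⟨u, w, hu, hw, huw, ha1, ha2⟩ := h3 _ _ (hltj i) _ hv
        obtain ⟨b1, rfl⟩ := hright _ _ ha1
        obtain ⟨b2, rfl⟩ := hright _ _ ha2
        exact ⟨(b1, b2), by simpa using huw, hu, hw⟩
      choose q hq hm1 hm2 using H
      have := aux_count P h2 Sum.inr Sum.inr_injective q hq (fun i => ⟨hm1 i, hm2 i⟩)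
      simp at this
      omega
  have hmem : (n+1) ∈ {k | ∃ P : Fin k → Set (Fin (2*n) ⊕ Fin (2*n-1)), TwoTransPart G k P} := by
    -- build equivs sending x0,x1 to 0,1 and y0,y1 to 0,1
    set z0 : Fin (2*n) := ⟨0, by omega⟩
    set z1 : Fin (2*n) := ⟨1, by omega⟩
    set w0 : Fin (2*n-1) := ⟨0, by omega⟩
    set w1 : Fin (2*n-1) := ⟨1, by omega⟩
    set d := Equiv.swap z0 x0 with hd
    set c := d.trans (Equiv.swap z1 (d x1)) with hc
    have hdx1 : d x1 ≠ z0 := by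
      intro h
      exact hx (d.injective (by rw [h, hd, Equiv.swap_apply_right])).symm
    have hc0 : c x0 = z0 := by
      rw [hc]
      simp only [Equiv.trans_apply, hd, Equiv.swap_apply_right]
      rw [← hd]
      exact Equiv.swap_apply_of_ne_of_ne (by simp [z0, z1, Fin.ext_iff]) (Ne.symm hdx1)
    have hc1 : c x1 = z1 := by
      rw [hc]
      simp only [Equiv.trans_apply, Equiv.swap_apply_right]
    set d' := Equiv.swap w0 y0 with hd'
    set c' := d'.trans (Equiv.swap w1 (d' y1)) with hc'
    have hdy1 : d' y1 ≠ w0 := by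
      intro h
      exact hy (d'.injective (by rw [h, hd', Equiv.swap_apply_right])).symm
    have hc0' : c' y0 = w0 := by
      rw [hc']
      simp only [Equiv.trans_apply, hd', Equiv.swap_apply_right]
      rw [← hd']
      exact Equiv.swap_apply_of_ne_of_ne (by simp [w0, w1, Fin.ext_iff]) (Ne.symm hdy1)
    have hc1' : c' y1 = w1 := by
      rw [hc']
      simp only [Equiv.trans_apply, Equiv.swap_apply_right]
    set f : Fin (2*n) → Fin (n+1) := fun x => ⟨(c x).val / 2, by have := (c x).2; omega⟩ with hf
    set g : Fin (2*n-1) → Fin (n+1) := fun y =>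
      if (c' y).val = 2*n-2 then ⟨n, by omega⟩
      else ⟨(c' y).val / 2, by have := (c' y).2; omega⟩ with hg
    refine ⟨fun i => {v | Sum.elim f g v = i}, ?_, ?_, ?_⟩
    · intro i
      by_cases hi : i.val = n
      · refine ⟨Sum.inr (c'.symm ⟨2*n-2, by omega⟩), ?_⟩
        simp only [Set.mem_setOf_eq, Sum.elim_inr, hg, Equiv.apply_symm_apply]
        simp [Fin.ext_iff, hi.symm]
      · have hi' : i.val < n := lt_of_le_of_ne (by omega) hi
        refine ⟨Sum.inl (c.symm ⟨2*i.val, by omega⟩), ?_⟩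
        simp only [Set.mem_setOf_eq, Sum.elim_inl, hf, Equiv.apply_symm_apply]
        apply Fin.ext
        simp

    · intro v
      exact ⟨Sum.elim f g v, rfl, fun y hy => hy.symm⟩
    · intro i j hij v hv
      have hij' : i.val < j.val := hij
      cases v with
      | inl a =>
        have hva : f a = j := hv
        have hja : (c a).val / 2 = j.val := congrArg Fin.val hva
        have hjub : j.val ≤ n - 1 := by have := (c a).2; omega
        have hi2 : i.val ≤ n - 2 := by omega
        have ha0 : a ≠ x0 := by
          intro h; subst h
          rw [hc0] at hja
          simp [z0] at hja
          omega
        have ha1 : a ≠ x1 := by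
          intro h; subst h
          rw [hc1] at hja
          simp [z1] at hja
          omega
        refine ⟨Sum.inr (c'.symm ⟨2*i.val, by omega⟩), Sum.inr (c'.symm ⟨2*i.val+1, by omega⟩),
          ?_, ?_, ?_, ?_, ?_⟩
        · simp only [Set.mem_setOf_eq, Sum.elim_inr, hg, Equiv.apply_symm_apply]
          rw [if_neg (show ¬(2*i.val : ℕ) = 2*n-2 by omega)]
          apply Fin.ext; simp
        · simp only [Set.mem_setOf_eq, Sum.elim_inr, hg, Equiv.apply_symm_apply]
          rw [if_neg (show ¬(2*i.val+1 : ℕ) = 2*n-2 by omega)]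
          apply Fin.ext; simp; omega
        · simp only [ne_eq, Sum.inr.injEq, EmbeddingLike.apply_eq_iff_eq, Fin.mk.injEq]
          omega
        · exact ((hAdj _ _).2 (fun h => by rcases h.1 with h' | h' <;> [exact ha0 h'; exact ha1 h'])).symm
        · exact ((hAdj _ _).2 (fun h => by rcases h.1 with h' | h' <;> [exact ha0 h'; exact ha1 h'])).symm
      | inr b =>
        have hvb : g b = j := hv
        have hjb : 1 ≤ j.val := by omega
        have hb0 : b ≠ y0 := by
          intro h; subst h
          rw [hg] at hvb
          simp only [hc0'] at hvb
          have : (w0.val = 2*n-2 → False) := by simp [w0]; omega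
          rw [if_neg this] at hvb
          have := congrArg Fin.val hvb
          simp [w0] at this
          omega
        have hb1 : b ≠ y1 := by
          intro h; subst h
          rw [hg] at hvb
          simp only [hc1'] at hvb
          have : (w1.val = 2*n-2 → False) := by simp [w1]; omega
          rw [if_neg this] at hvb
          have := congrArg Fin.val hvb
          simp [w1] at this
          omega
        have hi1 : i.val ≤ n - 1 := by omega
        refine ⟨Sum.inl (c.symm ⟨2*i.val, by omega⟩), Sum.inl (c.symm ⟨2*i.val+1, by omega⟩),
          ?_, ?_, ?_, ?_, ?_⟩
        · simp only [Set.mem_setOf_eq, Sum.elim_inl, hf, Equiv.apply_symm_apply]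
          apply Fin.ext; simp
        · simp only [Set.mem_setOf_eq, Sum.elim_inl, hf, Equiv.apply_symm_apply]
          apply Fin.ext; simp; omega
        · simp only [ne_eq, Sum.inl.injEq, EmbeddingLike.apply_eq_iff_eq, Fin.mk.injEq]
          omega
        · exact (hAdj _ _).2 (fun h => by rcases h.2 with h' | h' <;> [exact hb0 h'; exact hb1 h'])
        · exact (hAdj _ _).2 (fun h => by rcases h.2 with h' | h' <;> [exact hb0 h'; exact hb1 h'])
  rw [tr2]
  exact le_antisymm (csSup_le ⟨n+1, hmem⟩ hub) (le_csSup ⟨n+1, hub⟩ hmem)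

theorem stmt18 (t : ℕ) (ht : 2 ≤ t)
    (x0 x1 : Fin (2 * (t / 2))) (y0 y1 : Fin (2 * (t / 2) - 1))
    (hx : x0 ≠ x1) (hy : y0 ≠ y1) :
    tr2 ((completeBipartiteGraph (Fin (2 * (t / 2))) (Fin (2 * (t / 2) - 1))) \
        SimpleGraph.fromEdgeSet
          {s(Sum.inl x0, Sum.inr y0), s(Sum.inl x0, Sum.inr y1),
            s(Sum.inl x1, Sum.inr y0), s(Sum.inl x1, Sum.inr y1)}) = t / 2 + 1 := by
  rcases Nat.lt_or_ge (t / 2) 2 with h | h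
  · exfalso
    apply hy
    apply Fin.ext
    have h0 := y0.2
    have h1 := y1.2
    omega
  · exact key (t / 2) h x0 x1 y0 y1 hx hy
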